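/- (Core of Theorem 3: sufficiency of the arithmetic mean.) Let L ≥ 1 and 0 < ρ < 1. For every x = (x₁,…,x_L) ∈ ℝ^L and every a ∈ Λ, the posterior probability of the discrete Gaussian symbol a given the L observations in the model X̄_i = W̄ + √(1−ρ)N_i equals its posterior probability given only the arithmetic mean u = (x₁+⋯+x_L)/L in the scalar model Ū = W̄ + √((1−ρ)/L)·N: namely, D_{Λ,√ρ}(a)·∏_{i=1}^L f_{√(1−ρ)}(x_i−a) / (∑_{a'∈Λ} D_{Λ,√ρ}(a')·∏_{i=1}^L f_{√(1−ρ)}(x_i−a')) = D_{Λ,√ρ}(a)·f_{√((1−ρ)/L)}(u−a) / (∑_{a'∈Λ} D_{Λ,√ρ}(a')·f_{√((1−ρ)/L)}(u−a')). Consequently, extracting the common information of the L jointly Gaussian sources with covariance K_L via the reconstruction distribution D_{Λ,√ρ} is equivalent to lossy compression of the single Gaussian source (X₁+⋯+X_L)/L, whose variance is (1+(L−1)ρ)/L. -/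

import Mathlib

open Real

/-- The centered Gaussian density with standard deviation `σ`. -/
noncomputable def gpdf (σ x : ℝ) : ℝ :=
  (1 / (Real.sqrt (2 * Real.pi) * σ)) * Real.exp (-(x ^ 2) / (2 * σ ^ 2))

/-- The discrete Gaussian distribution over the lattice `Λ = bℤ` with parameter `σ`,
evaluated at the lattice point `b * k`. -/
noncomputable def dgauss (b σ : ℝ) (k : ℤ) : ℝ :=
  gpdf σ (b * k) / ∑' j : ℤ, gpdf σ (b * j)

lemma prod_gpdf_key (L : ℕ) (hL : 1 ≤ L) (ρ : ℝ) (hρ1 : ρ < 1) (x : Fin L → ℝ) :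
    ∃ c > 0, ∀ a : ℝ, (∏ i, gpdf (Real.sqrt (1 - ρ)) (x i - a)) =
      c * gpdf (Real.sqrt ((1 - ρ) / L)) ((∑ i, x i) / L - a) := by
  have hσ2 : (0:ℝ) < 1 - ρ := by linarith
  have hLpos : (0:ℝ) < (L:ℝ) := by exact_mod_cast hL
  set σ := Real.sqrt (1 - ρ) with hσ
  set σ' := Real.sqrt ((1 - ρ) / L) with hσ'
  have hσpos : 0 < σ := Real.sqrt_pos.mpr hσ2
  have hσ'pos : 0 < σ' := Real.sqrt_pos.mpr (by positivity)
  have hσsq : σ ^ 2 = 1 - ρ := Real.sq_sqrt hσ2.le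
  have hσ'sq : σ' ^ 2 = (1 - ρ) / L := Real.sq_sqrt (by positivity)
  set K : ℝ := 1 / (Real.sqrt (2 * Real.pi) * σ)
  set K' : ℝ := 1 / (Real.sqrt (2 * Real.pi) * σ')
  have hKpos : 0 < K := by
    have : 0 < Real.sqrt (2 * Real.pi) := Real.sqrt_pos.mpr (by positivity)
    positivity
  have hK'pos : 0 < K' := by
    have : 0 < Real.sqrt (2 * Real.pi) := Real.sqrt_pos.mpr (by positivity)
    positivity
  set S : ℝ := ∑ i, x i
  refine ⟨K ^ L / K' * Real.exp (-((∑ i, x i ^ 2) - L * (S / L) ^ 2) / (2 * σ ^ 2)), by positivity,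
    fun a => ?_⟩
  have hlhs : (∏ i, gpdf σ (x i - a)) =
      K ^ L * Real.exp (∑ i, (-((x i - a) ^ 2) / (2 * σ ^ 2))) := by
    simp only [gpdf]
    rw [Finset.prod_mul_distrib, Finset.prod_const, Finset.card_univ, Fintype.card_fin,
      ← Real.exp_sum]
  rw [hlhs, gpdf]
  rw [show (1 / (Real.sqrt (2 * Real.pi) * σ')) = K' from rfl]
  rw [show K ^ L / K' * Real.exp (-((∑ i, x i ^ 2) - L * (S / L) ^ 2) / (2 * σ ^ 2)) *
      (K' * Real.exp (-((S / L - a) ^ 2) / (2 * σ' ^ 2))) =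
      K ^ L * (K' / K') * (Real.exp (-((∑ i, x i ^ 2) - L * (S / L) ^ 2) / (2 * σ ^ 2)) *
        Real.exp (-((S / L - a) ^ 2) / (2 * σ' ^ 2))) from by ring]
  rw [div_self hK'pos.ne', mul_one, ← Real.exp_add]
  congr 1
  have hexp : ∑ i, (-((x i - a) ^ 2) / (2 * σ ^ 2)) =
      (∑ i, -((x i - a) ^ 2)) / (2 * σ ^ 2) := by
    rw [Finset.sum_div]
  rw [hexp, hσsq, hσ'sq]
  have hsum : (∑ i, -((x i - a) ^ 2)) = -((∑ i, x i ^ 2) - 2 * a * S + L * a ^ 2) := by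
    have : ∀ i : Fin L, -((x i - a) ^ 2) = -(x i ^ 2) + 2 * a * x i + (-(a^2)) := by
      intro i; ring
    simp only [this, Finset.sum_add_distrib, Finset.sum_neg_distrib, ← Finset.mul_sum]
    simp [S, Finset.sum_const, mul_comm]
    ring
  rw [hsum]
  rw [Real.exp_eq_exp]
  field_simp
  ring

/-- core of Theorem 3: the posterior probability of the discrete Gaussian
symbol `a = b k` given the `L` observations in the model `X̄ᵢ = W̄ + √(1-ρ)Nᵢ` equals its
posterior probability given only the arithmetic mean `u = (x₁+⋯+x_L)/L` in the scalar
model `Ū = W̄ + √((1-ρ)/L) N`; hence extracting the common information of the `L` jointly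
Gaussian sources via `D_{Λ,√ρ}` is equivalent to lossy compression of the single Gaussian
source `(X₁+⋯+X_L)/L`. -/
theorem posterior_L_sources_eq_posterior_mean (L : ℕ) (hL : 1 ≤ L) (ρ b : ℝ) (hb : 0 < b)
    (hρ0 : 0 < ρ) (hρ1 : ρ < 1) (x : Fin L → ℝ) (k : ℤ) :
    dgauss b (Real.sqrt ρ) k * (∏ i, gpdf (Real.sqrt (1 - ρ)) (x i - b * k)) /
        (∑' j : ℤ, dgauss b (Real.sqrt ρ) j *
          ∏ i, gpdf (Real.sqrt (1 - ρ)) (x i - b * j)) =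
      dgauss b (Real.sqrt ρ) k *
          gpdf (Real.sqrt ((1 - ρ) / L)) ((∑ i, x i) / L - b * k) /
        (∑' j : ℤ, dgauss b (Real.sqrt ρ) j *
          gpdf (Real.sqrt ((1 - ρ) / L)) ((∑ i, x i) / L - b * j)) := by
  obtain ⟨c, hc, hkey⟩ := prod_gpdf_key L hL ρ hρ1 x
  have hnum : ∀ j : ℤ, dgauss b (Real.sqrt ρ) j * ∏ i, gpdf (Real.sqrt (1 - ρ)) (x i - b * j)
      = c * (dgauss b (Real.sqrt ρ) j *
        gpdf (Real.sqrt ((1 - ρ) / L)) ((∑ i, x i) / L - b * j)) := by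
    intro j; rw [hkey (b * j)]; ring
  have hden : (∑' j : ℤ, dgauss b (Real.sqrt ρ) j *
      ∏ i, gpdf (Real.sqrt (1 - ρ)) (x i - b * j)) =
      c * ∑' j : ℤ, dgauss b (Real.sqrt ρ) j *
        gpdf (Real.sqrt ((1 - ρ) / L)) ((∑ i, x i) / L - b * j) := by
    rw [← tsum_mul_left]; exact tsum_congr hnum
  rw [hnum k, hden, mul_div_mul_left _ _ hc.ne']
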